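/- Assume b := 2αJΦ′(0) < 1, set a := b/2, let x_ℓ < 0 < x_r be the negative and positive solutions of 2αJΦ′(x) = a, set h := min(α/(2(1−α)), 1)·min(|x_ℓ|, x_r), let k be the minimal positive integer with b^k ≤ Jα(1−b)/(2b), and let λ_c := min( Jα(1−b)/(2bk), αJ/2, h ). Suppose λ ∈ (0, λ_c], and let (p_n, d_n)_{n≥0} be an orbit of the dynamical system generated by Ψ with d₀ ∈ [−1,1]. If 0 ≤ p₁ ≤ λ d₀, then either (p_n, d_n) → (0,0) as n → ∞, or there exists a finite ℓ ≥ 1 such that: (i) g_{p_j}(d_{j−1}) ≥ 0 for all j = 1,…,ℓ; (ii) 0 ≤ d_j ≤ b·d_{j−1} for all j = 1,…,ℓ; (iii) p_{j+1} ≥ p_j for all j = 1,…,ℓ; and (iv) g_{p_{ℓ+1}}(d_ℓ) ≤ 0. Symmetrically, if λ d₀ ≤ p₁ ≤ 0, then either (p_n, d_n) → (0,0), or there exists a finite ℓ ≥ 1 such that g_{p_j}(d_{j−1}) ≤ 0 and b·d_{j−1} ≤ d_j ≤ 0 and p_{j+1} ≤ p_j for all j = 1,…,ℓ, and g_{p_{ℓ+1}}(d_ℓ)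 ≥ 0. -/

import Mathlib

open Filter Set

open Filter Set

set_option maxHeartbeats 1000000 in
theorem one_sided (α J lam : ℝ) (Φ Φ' : ℝ → ℝ)
    (hα : 0 < α) (hα1 : α < 1) (hJ : 0 < J) (hlam : 0 < lam)
    (hmono : Monotone Φ)
    (hderiv : ∀ x, HasDerivAt Φ (Φ' x) x)
    (hmax : ∀ x, Φ' x ≤ Φ' 0)
    (hincr : StrictMonoOn Φ' (Set.Iio (0 : ℝ)))
    (hdecr : StrictAntiOn Φ' (Set.Ioi (0 : ℝ)))
    (hΦ0 : Φ 0 = 1 / 2)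
    (b : ℝ) (hbdef : b = 2 * α * J * Φ' 0) (hb : b < 1)
    (xl : ℝ) (hxl : xl < 0)
    (hxla : 2 * α * J * Φ' xl = b / 2)
    (hlam2 : lam ≤ α * J / 2)
    (hlamh : lam ≤ α / (2 * (1 - α)) * (-xl))
    (g : ℝ → ℝ → ℝ)
    (hg : ∀ p d : ℝ, g p d = α * (1 - 2 * Φ (p - J * d)) + (1 - α) * (1 - 2 * Φ p))
    (s : ℕ → ℝ × ℝ)
    (hrec1 : ∀ n : ℕ, (s (n+1)).1 = (s n).1 + lam * (s n).2)
    (hrec2 : ∀ n : ℕ, (s (n+1)).2 = g ((s (n+1)).1) ((s n).2))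
    (hd0 : (s 0).2 ≤ 1)
    (hp1 : 0 ≤ (s 1).1) (hp1' : (s 1).1 ≤ lam * (s 0).2) :
    Filter.Tendsto s Filter.atTop (nhds ((0 : ℝ), (0 : ℝ))) ∨
      ∃ l : ℕ, 1 ≤ l ∧
        (∀ j : ℕ, 1 ≤ j → j ≤ l → 0 ≤ g ((s j).1) ((s (j - 1)).2)) ∧
        (∀ j : ℕ, 1 ≤ j → j ≤ l → 0 ≤ (s j).2 ∧ (s j).2 ≤ b * (s (j - 1)).2) ∧
        (∀ j : ℕ, 1 ≤ j → j ≤ l → (s j).1 ≤ (s (j + 1)).1) ∧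
        g ((s (l + 1)).1) ((s l).2) ≤ 0 := by
  classical
  have h1α : (0:ℝ) < 1 - α := by linarith
  have h2αJ : (0:ℝ) < 2 * α * J := by positivity
  have hxl2 : Φ' xl = Φ' 0 / 2 := by
    have h1 : 2 * α * J * Φ' xl = 2 * α * J * (Φ' 0 / 2) := by rw [hxla, hbdef]; ring
    exact mul_left_cancel₀ (ne_of_gt h2αJ) h1
  have hΦ'0 : 0 < Φ' 0 := by
    have h1 : Φ' xl < Φ' (xl / 2) :=
      hincr (Set.mem_Iio.2 hxl) (Set.mem_Iio.2 (by linarith)) (by linarith)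
    have h2 := hmax (xl / 2)
    rw [hxl2] at h1
    linarith
  have hb0 : 0 < b := by rw [hbdef]; positivity
  -- L1 : global upper Lipschitz bound
  have L1 : ∀ x y : ℝ, x ≤ y → Φ y - Φ x ≤ Φ' 0 * (y - x) := by
    intro x y hxy
    have hF : ∀ z : ℝ, HasDerivAt (fun t => Φ' 0 * t - Φ t) (Φ' 0 * 1 - Φ' z) z := fun z =>
      ((hasDerivAt_id z).const_mul (Φ' 0)).sub (hderiv z)
    have hFmono : Monotone (fun t => Φ' 0 * t - Φ t) :=
      monotone_of_deriv_nonneg (fun z => (hF z).differentiableAt)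
        (fun z => by rw [(hF z).deriv]; linarith [hmax z])
    have := hFmono hxy
    simp only at this
    linarith
  -- L3 : nonnegativity of the derivative
  have L3 : ∀ x : ℝ, 0 ≤ Φ' x := by
    intro x
    have hs := hasDerivAt_iff_tendsto_slope.1 (hderiv x)
    have hs' : Filter.Tendsto (slope Φ x) (nhdsWithin x (Set.Ioi x)) (nhds (Φ' x)) :=
      hs.mono_left (nhdsWithin_mono x (fun y hy => Set.mem_compl_singleton_iff.2 (ne_of_gt hy)))
    refine ge_of_tendsto hs' ?_
    filter_upwards [self_mem_nhdsWithin] with y hy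
    have hxy : x < y := hy
    rw [slope_def_field]
    apply div_nonneg _ (by linarith)
    have := hmono hxy.le
    linarith
  -- L4 : Φ is strictly above 1/2 on (0,∞)
  have L4 : ∀ q : ℝ, 0 < q → 1/2 < Φ q := by
    intro q hq
    have hsm : StrictMonoOn Φ (Set.Ici (0:ℝ)) := by
      apply strictMonoOn_of_deriv_pos (convex_Ici 0)
        (fun z _ => (hderiv z).continuousAt.continuousWithinAt)
      intro z hz
      rw [interior_Ici] at hz
      rw [(hderiv z).deriv]
      have h1 : Φ' (z+1) < Φ' z := hdecr hz (Set.mem_Ioi.2 (by linarith [Set.mem_Ioi.1 hz])) (by linarith)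
      linarith [L3 (z+1)]
    have := hsm Set.self_mem_Ici (Set.mem_Ici.2 hq.le) hq
    rw [hΦ0] at this
    exact this
  -- L2 : lower derivative bound on [xl, 0]
  have L2 : ∀ x : ℝ, xl ≤ x → x ≤ 0 → Φ' 0 / 2 * (0 - x) ≤ Φ 0 - Φ x := by
    intro x hx1 hx2
    have hG : ∀ z : ℝ, HasDerivAt (fun t => Φ t - Φ' 0 / 2 * t) (Φ' z - Φ' 0 / 2 * 1) z := fun z =>
      (hderiv z).sub ((hasDerivAt_id z).const_mul (Φ' 0 / 2))
    have hmO : MonotoneOn (fun t => Φ t - Φ' 0 / 2 * t) (Set.Icc xl 0) := by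
      apply monotoneOn_of_deriv_nonneg (convex_Icc xl 0)
        (fun z _ => (hG z).differentiableAt.continuousAt.continuousWithinAt)
        (fun z _ => (hG z).differentiableAt.differentiableWithinAt)
      intro z hz
      rw [interior_Icc] at hz
      rw [(hG z).deriv]
      have h1 : Φ' xl ≤ Φ' z := by
        rcases eq_or_lt_of_le (le_of_lt hz.1) with he | hlt
        · rw [he]
        · exact (hincr (Set.mem_Iio.2 hxl) (Set.mem_Iio.2 hz.2) hlt).le
      rw [hxl2] at h1
      linarith
    have := hmO (Set.mem_Icc.2 ⟨hx1, hx2⟩) (Set.mem_Icc.2 ⟨hxl.le, le_refl 0⟩) hx2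
    simp only at this
    linarith
  -- Lemma A : contraction
  have lemA : ∀ p d : ℝ, 0 ≤ p → 0 ≤ d → g p d ≤ b * d := by
    intro p d hp hd
    have h1 : Φ 0 ≤ Φ p := hmono hp
    have h2 : Φ (-(J*d)) ≤ Φ (p - J*d) := hmono (by linarith)
    have h3 : Φ 0 - Φ (-(J*d)) ≤ Φ' 0 * (0 - -(J*d)) := L1 _ _ (by linarith [mul_nonneg hJ.le hd])
    rw [hΦ0] at h1 h3
    have f1 : α * Φ (-(J*d)) ≤ α * Φ (p - J*d) := mul_le_mul_of_nonneg_left h2 hα.le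
    have f2 : α * (1/2 - Φ (-(J*d))) ≤ α * (Φ' 0 * (J*d)) :=
      mul_le_mul_of_nonneg_left (by linarith) hα.le
    have f3 : (1-α) * (1 - 2*Φ p) ≤ 0 :=
      mul_nonpos_of_nonneg_of_nonpos h1α.le (by linarith)
    rw [hg, hbdef]
    linarith [f1, f2, f3]
  have hd00 : 0 ≤ (s 0).2 := by
    have h0 : lam * 0 ≤ lam * (s 0).2 := by
      rw [mul_zero]; exact le_trans hp1 hp1'
    exact le_of_mul_le_mul_left h0 hlam
  -- Lemma B : the first step stays nonnegative
  have lemB : 0 ≤ g ((s 1).1) ((s 0).2) := by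
    set p := (s 1).1 with hpdef
    set d := (s 0).2 with hddef
    have hJl : lam < J := by nlinarith [mul_pos hJ (sub_pos.2 hα1)]
    have h1 : Φ p ≤ Φ (lam * d) := hmono hp1'
    have h2 : Φ (lam*d) - Φ 0 ≤ Φ' 0 * (lam*d - 0) := L1 0 (lam*d) (mul_nonneg hlam.le hd00)
    set w := min ((J - lam) * d) (-xl) with hw
    have hw0 : 0 ≤ w := le_min (mul_nonneg (by linarith) hd00) (by linarith)
    have hwle : w ≤ (J - lam)*d := min_le_left _ _
    have hwxl : w ≤ -xl := min_le_right _ _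
    have h3 : Φ (p - J*d) ≤ Φ (-w) := hmono (by linarith [hwle, hp1'])
    have h4 : Φ' 0 / 2 * (0 - -w) ≤ Φ 0 - Φ (-w) := L2 (-w) (by linarith) (by linarith)
    have key : 2*(1-α)*(lam*d) ≤ α * w := by
      rcases le_total ((J - lam)*d) (-xl) with hc | hc
      · have hwe : w = (J-lam)*d := min_eq_left hc
        rw [hwe]
        have hcoef : 0 ≤ α*(J-lam) - 2*(1-α)*lam := by nlinarith [mul_pos hα hlam]
        linarith [mul_nonneg hcoef hd00]
      · have hwe : w = -xl := min_eq_right hc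
        rw [hwe]
        have h5 : 2*(1-α)*lam ≤ α * (-xl) := by
          have h6 := mul_le_mul_of_nonneg_left hlamh (by linarith : (0:ℝ) ≤ 2*(1-α))
          have heq : 2*(1-α) * (α/(2*(1-α)) * (-xl)) = α * (-xl) := by
            field_simp
          rw [heq] at h6
          linarith
        have h7 : lam * d ≤ lam * 1 := mul_le_mul_of_nonneg_left hd0 hlam.le
        have h8 : (1-α) * (lam*d) ≤ (1-α) * (lam*1) := mul_le_mul_of_nonneg_left h7 h1α.le
        linarith
    rw [hΦ0] at h2 h4
    have q1 : α * Φ (p - J*d) ≤ α * Φ (-w) := mul_le_mul_of_nonneg_left h3 hα.le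
    have q2 : (1-α) * Φ p ≤ (1-α) * Φ (lam*d) := mul_le_mul_of_nonneg_left h1 h1α.le
    have q3 : α * Φ (-w) ≤ α * (1/2 - Φ' 0 / 2 * w) :=
      mul_le_mul_of_nonneg_left (by linarith) hα.le
    have q4 : (1-α) * Φ (lam*d) ≤ (1-α) * (1/2 + Φ' 0 * (lam*d)) :=
      mul_le_mul_of_nonneg_left (by linarith) h1α.le
    have q5 : Φ' 0 * (2*(1-α)*(lam*d)) ≤ Φ' 0 * (α*w) :=
      mul_le_mul_of_nonneg_left key hΦ'0.le
    rw [hg]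
    linarith [q1, q2, q3, q4, q5]
  have hd1 : 0 ≤ (s 1).2 := by rw [hrec2 0]; exact lemB
  by_cases hall : ∀ n : ℕ, 1 ≤ n → 0 ≤ (s n).2
  · -- convergence case
    left
    have hdnn : ∀ n : ℕ, 0 ≤ (s n).2 := by
      intro n
      rcases Nat.eq_zero_or_pos n with h0 | h0
      · rw [h0]; exact hd00
      · exact hall n h0
    have hpnn : ∀ n : ℕ, 0 ≤ (s (n+1)).1 := by
      intro n
      induction n with
      | zero => exact hp1
      | succ m ih =>
        rw [hrec1 (m+1)]
        have := mul_nonneg hlam.le (hdnn (m+1))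
        linarith
    have hpow : ∀ n : ℕ, (s n).2 ≤ b ^ n := by
      intro n
      induction n with
      | zero => simpa using hd0
      | succ m ih =>
        rw [hrec2 m]
        calc g ((s (m+1)).1) ((s m).2) ≤ b * (s m).2 := lemA _ _ (hpnn m) (hdnn m)
          _ ≤ b * b ^ m := mul_le_mul_of_nonneg_left ih hb0.le
          _ = b ^ (m+1) := by ring
    have hpmono : ∀ n : ℕ, (s n).1 ≤ (s (n+1)).1 := by
      intro n
      rw [hrec1 n]
      have := mul_nonneg hlam.le (hdnn n)
      linarith
    have hpmono' : ∀ m n : ℕ, m ≤ n → (s m).1 ≤ (s n).1 := by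
      intro m n hmn
      induction n with
      | zero =>
        have : m = 0 := Nat.le_zero.1 hmn
        rw [this]
      | succ p ih =>
        rcases Nat.eq_or_lt_of_le hmn with he | hlt
        · rw [he]
        · exact le_trans (ih (by omega)) (hpmono p)
    have hp0 : ∀ n : ℕ, 1 ≤ n → (s n).1 = 0 := by
      intro n hn
      by_contra hne
      have hpos : 0 < (s n).1 := by
        obtain ⟨m, rfl⟩ : ∃ m, n = m + 1 := ⟨n - 1, by omega⟩
        exact lt_of_le_of_ne (hpnn m) (Ne.symm hne)
      obtain ⟨m, hm⟩ := exists_pow_lt_of_lt_one (show (0:ℝ) < (s n).1 / J by positivity) hb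
      set N := max m n with hN
      have hbN : b ^ N ≤ b ^ m := pow_le_pow_of_le_one hb0.le hb.le (le_max_left m n)
      have hdN : (s N).2 < (s n).1 / J := lt_of_le_of_lt (le_trans (hpow N) hbN) hm
      have hpN : (s n).1 ≤ (s (N+1)).1 := hpmono' n (N+1) (le_trans (le_max_right m n) (Nat.le_succ N))
      have hgneg : (s (N+1)).2 < 0 := by
        rw [hrec2 N, hg]
        have hdN' : (s N).2 * J < (s n).1 := (lt_div_iff₀ hJ).1 hdN
        have e1 : (0:ℝ) ≤ (s (N+1)).1 - J * (s N).2 := by linarith [hdN', hpN, mul_comm ((s N).2) J]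
        have e2 : 1/2 ≤ Φ ((s (N+1)).1 - J * (s N).2) := by
          rw [← hΦ0]; exact hmono e1
        have e3 : 1/2 < Φ ((s (N+1)).1) := L4 _ (lt_of_lt_of_le hpos hpN)
        have t1 : α * (1 - 2*Φ ((s (N+1)).1 - J * (s N).2)) ≤ 0 :=
          mul_nonpos_of_nonneg_of_nonpos hα.le (by linarith)
        have t2 : (1-α) * (1 - 2*Φ ((s (N+1)).1)) < 0 :=
          mul_neg_of_pos_of_neg h1α (by linarith)
        linarith
      exact absurd (hall (N+1) (by omega)) (not_le.2 hgneg)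
    have hd0' : ∀ n : ℕ, 1 ≤ n → (s n).2 = 0 := by
      intro n hn
      have h1 := hrec1 n
      rw [hp0 n hn, hp0 (n+1) (by omega)] at h1
      have h2 : lam * (s n).2 = 0 := by linarith
      rcases mul_eq_zero.1 h2 with h3 | h3
      · exact absurd h3 (ne_of_gt hlam)
      · exact h3
    have hev : ∀ᶠ n in Filter.atTop, (fun _ : ℕ => ((0:ℝ),(0:ℝ))) n = s n := by
      refine Filter.eventually_atTop.2 ⟨1, fun n hn => ?_⟩
      show ((0:ℝ),(0:ℝ)) = s n
      exact (Prod.ext_iff.2 ⟨hp0 n hn, hd0' n hn⟩).symm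
    exact Filter.Tendsto.congr' hev tendsto_const_nhds
  · -- exit case
    right
    push_neg at hall
    have hex : ∃ n : ℕ, 1 ≤ n ∧ (s n).2 < 0 := by
      obtain ⟨n, hn1, hn2⟩ := hall
      exact ⟨n, hn1, hn2⟩
    set n₀ := Nat.find hex with hn₀def
    have hspec : 1 ≤ n₀ ∧ (s n₀).2 < 0 := Nat.find_spec hex
    have hminw : ∀ m : ℕ, m < n₀ → ¬(1 ≤ m ∧ (s m).2 < 0) := fun m hm => Nat.find_min hex hm
    have hn₀2 : 2 ≤ n₀ := by
      by_contra hlt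
      have h1 : n₀ = 1 := by omega
      rw [h1] at hspec
      exact absurd hd1 (not_le.2 hspec.2)
    have hdnn : ∀ j : ℕ, j ≤ n₀ - 1 → 0 ≤ (s j).2 := by
      intro j hj
      rcases Nat.eq_zero_or_pos j with h0 | h0
      · rw [h0]; exact hd00
      · by_contra hneg
        exact hminw j (by omega) ⟨h0, not_le.1 hneg⟩
    have hpnn : ∀ j : ℕ, j ≤ n₀ - 1 → 0 ≤ (s (j+1)).1 := by
      intro j
      induction j with
      | zero => intro _; exact hp1
      | succ m ih =>
        intro hm
        rw [hrec1 (m+1)]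
        have h1 := ih (by omega)
        have h2 := mul_nonneg hlam.le (hdnn (m+1) (by omega))
        linarith
    refine ⟨n₀ - 1, by omega, ?_, ?_, ?_, ?_⟩
    · intro j hj1 hj2
      obtain ⟨m, rfl⟩ : ∃ m, j = m + 1 := ⟨j - 1, by omega⟩
      simp only [Nat.add_sub_cancel]
      rw [← hrec2 m]
      exact hdnn (m+1) (by omega)
    · intro j hj1 hj2
      obtain ⟨m, rfl⟩ : ∃ m, j = m + 1 := ⟨j - 1, by omega⟩
      simp only [Nat.add_sub_cancel]
      refine ⟨hdnn (m+1) hj2, ?_⟩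
      rw [hrec2 m]
      exact lemA _ _ (by
        rcases Nat.eq_zero_or_pos m with h0 | h0
        · rw [h0]; exact hp1
        · exact hpnn m (by omega)) (hdnn m (by omega))
    · intro j hj1 hj2
      rw [hrec1 j]
      have := mul_nonneg hlam.le (hdnn j hj2)
      linarith
    · have he : n₀ - 1 + 1 = n₀ := by omega
      rw [← hrec2 (n₀ - 1), he]
      exact hspec.2.le

set_option maxHeartbeats 1000000


/-- Lemma sitin1: under the smallness condition λ ∈ (0, λ_c], an orbit starting
with 0 ≤ p₁ ≤ λd₀ (resp. λd₀ ≤ p₁ ≤ 0) either converges to (0,0) or there is a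
finite ℓ ≥ 1 with (i) g_{p_j}(d_{j−1}) ≥ 0, (ii) 0 ≤ d_j ≤ b d_{j−1},
(iii) p_{j+1} ≥ p_j for j = 1,…,ℓ, and (iv) g_{p_{ℓ+1}}(d_ℓ) ≤ 0
(resp. the symmetric statement). -/
theorem orbit_decay_blocks
    (α J lam : ℝ) (Φ Φ' : ℝ → ℝ)
    (hα : 0 < α) (hα1 : α < 1) (hJ : 0 < J) (hlam : 0 < lam)
    (hmono : Monotone Φ)
    (hbot : Filter.Tendsto Φ Filter.atBot (nhds 0))
    (htop : Filter.Tendsto Φ Filter.atTop (nhds 1))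
    (hderiv : ∀ x, HasDerivAt Φ (Φ' x) x)
    (hmax : ∀ x, Φ' x ≤ Φ' 0)
    (hincr : StrictMonoOn Φ' (Set.Iio (0 : ℝ)))
    (hdecr : StrictAntiOn Φ' (Set.Ioi (0 : ℝ)))
    (hΦ0 : Φ 0 = 1 / 2)
    (b a : ℝ) (hbdef : b = 2 * α * J * Φ' 0) (hb : b < 1) (hadef : a = b / 2)
    (xl xr : ℝ) (hxl : xl < 0) (hxr : 0 < xr)
    (hxla : 2 * α * J * Φ' xl = a) (hxra : 2 * α * J * Φ' xr = a)
    (h : ℝ) (hhdef : h = min (α / (2 * (1 - α))) 1 * min |xl| xr)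
    (k : ℕ) (hk1 : 0 < k) (hk2 : b ^ k ≤ J * α * (1 - b) / (2 * b))
    (hkmin : ∀ m : ℕ, 0 < m → b ^ m ≤ J * α * (1 - b) / (2 * b) → k ≤ m)
    (lamc : ℝ) (hlamc : lamc = min (J * α * (1 - b) / (2 * b * k)) (min (α * J / 2) h))
    (hlamle : lam ≤ lamc)
    (g : ℝ → ℝ → ℝ)
    (hg : ∀ p d : ℝ, g p d = α * (1 - 2 * Φ (p - J * d)) + (1 - α) * (1 - 2 * Φ p))
    (Ψ : ℝ × ℝ → ℝ × ℝ)
    (hΨ : ∀ x : ℝ × ℝ, Ψ x =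
      (x.1 + lam * x.2,
       α * (1 - 2 * Φ (x.1 + (lam - J) * x.2))
         + (1 - α) * (1 - 2 * Φ (x.1 + lam * x.2))))
    (s : ℕ → ℝ × ℝ)
    (horb : ∀ n : ℕ, s (n + 1) = Ψ (s n))
    (hd0 : (s 0).2 ∈ Set.Icc (-1 : ℝ) 1) :
    ((0 ≤ (s 1).1 ∧ (s 1).1 ≤ lam * (s 0).2) →
      Filter.Tendsto s Filter.atTop (nhds ((0 : ℝ), (0 : ℝ))) ∨
      ∃ l : ℕ, 1 ≤ l ∧
        (∀ j : ℕ, 1 ≤ j → j ≤ l → 0 ≤ g ((s j).1) ((s (j - 1)).2)) ∧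
        (∀ j : ℕ, 1 ≤ j → j ≤ l → 0 ≤ (s j).2 ∧ (s j).2 ≤ b * (s (j - 1)).2) ∧
        (∀ j : ℕ, 1 ≤ j → j ≤ l → (s j).1 ≤ (s (j + 1)).1) ∧
        g ((s (l + 1)).1) ((s l).2) ≤ 0) ∧
    ((lam * (s 0).2 ≤ (s 1).1 ∧ (s 1).1 ≤ 0) →
      Filter.Tendsto s Filter.atTop (nhds ((0 : ℝ), (0 : ℝ))) ∨
      ∃ l : ℕ, 1 ≤ l ∧
        (∀ j : ℕ, 1 ≤ j → j ≤ l → g ((s j).1) ((s (j - 1)).2) ≤ 0) ∧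
        (∀ j : ℕ, 1 ≤ j → j ≤ l → b * (s (j - 1)).2 ≤ (s j).2 ∧ (s j).2 ≤ 0) ∧
        (∀ j : ℕ, 1 ≤ j → j ≤ l → (s (j + 1)).1 ≤ (s j).1) ∧
        0 ≤ g ((s (l + 1)).1) ((s l).2)) := by
  have h1α : (0:ℝ) < 1 - α := by linarith
  have hc0 : (0:ℝ) ≤ α / (2 * (1 - α)) := by positivity
  have hmins : (0:ℝ) ≤ min |xl| xr := le_min (abs_nonneg xl) hxr.le
  have habsxl : |xl| = -xl := abs_of_neg hxl
  -- lam ≤ α J / 2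
  have hlam2 : lam ≤ α * J / 2 := by
    have := min_le_left (α * J / 2) h
    have h2 := min_le_right (J * α * (1 - b) / (2 * b * ↑k)) (min (α * J / 2) h)
    rw [← hlamc] at h2
    linarith [le_trans hlamle h2, this]
  have hlamhh : lam ≤ h := by
    have := min_le_right (α * J / 2) h
    have h2 := min_le_right (J * α * (1 - b) / (2 * b * ↑k)) (min (α * J / 2) h)
    rw [← hlamc] at h2
    linarith [le_trans hlamle h2, this]
  have hhl : h ≤ α / (2 * (1 - α)) * (-xl) := by
    rw [hhdef, ← habsxl]
    exact mul_le_mul (min_le_left _ _) (min_le_left _ _) hmins hc0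
  have hhr : h ≤ α / (2 * (1 - α)) * xr := by
    rw [hhdef]
    exact mul_le_mul (min_le_left _ _) (min_le_right _ _) hmins hc0
  -- recurrences
  have hrec1 : ∀ n : ℕ, (s (n+1)).1 = (s n).1 + lam * (s n).2 := by
    intro n
    rw [horb n, hΨ (s n)]
  have hrec2 : ∀ n : ℕ, (s (n+1)).2 = g ((s (n+1)).1) ((s n).2) := by
    intro n
    rw [horb n, hΨ (s n), hg]
    simp only
    have harg : (s n).1 + (lam - J) * (s n).2 = (s n).1 + lam * (s n).2 - J * (s n).2 := by
      ring
    rw [harg]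
  constructor
  · -- first bullet
    rintro ⟨hp1, hp1'⟩
    exact one_sided α J lam Φ Φ' hα hα1 hJ hlam hmono hderiv hmax hincr hdecr hΦ0
      b hbdef hb xl hxl (by rw [hxla, hadef]) hlam2 (le_trans hlamhh hhl)
      g hg s hrec1 hrec2 hd0.2 hp1 hp1'
  · -- second bullet, by reflection
    rintro ⟨hq1, hq2⟩
    have key := one_sided α J lam (fun x => 1 - Φ (-x)) (fun x => Φ' (-x)) hα hα1 hJ hlam
      (by
        intro u v huv
        simp only
        have := hmono (neg_le_neg huv)
        linarith)
      (by
        intro x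
        have h1 : HasDerivAt (fun t : ℝ => Φ (-t)) (Φ' (-x) * (-1)) x :=
          (hderiv (-x)).comp x (hasDerivAt_neg x)
        have h2 := h1.const_sub 1
        have h3 : -(Φ' (-x) * (-1)) = Φ' (-x) := by ring
        rw [h3] at h2
        exact h2)
      (by intro x; simp only [neg_zero]; exact hmax (-x))
      (by
        intro u hu v hv huv
        simp only
        exact hdecr (Set.mem_Ioi.2 (by linarith [Set.mem_Iio.1 hv]))
          (Set.mem_Ioi.2 (by linarith [Set.mem_Iio.1 hu])) (by linarith))
      (by
        intro u hu v hv huv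
        simp only
        exact hincr (Set.mem_Iio.2 (by linarith [Set.mem_Ioi.1 hv]))
          (Set.mem_Iio.2 (by linarith [Set.mem_Ioi.1 hu])) (by linarith))
      (by simp only [neg_zero, hΦ0]; norm_num)
      b (by simp only [neg_zero]; exact hbdef) hb
      (-xr) (by linarith)
      (by simp only [neg_neg]; rw [hxra, hadef])
      hlam2
      (by rw [neg_neg]; exact le_trans hlamhh hhr)
      (fun p d => -(g (-p) (-d)))
      (by
        intro p d
        show -(g (-p) (-d)) = α * (1 - 2 * (1 - Φ (-(p - J * d)))) + (1 - α) * (1 - 2 * (1 - Φ (-p)))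
        rw [hg]
        have harg : -p - J * -d = -(p - J * d) := by ring
        rw [harg]
        ring)
      (fun n => -(s n))
      (by
        intro n
        simp only [Prod.fst_neg, Prod.snd_neg]
        rw [hrec1 n]
        ring)
      (by
        intro n
        simp only [Prod.fst_neg, Prod.snd_neg, neg_neg]
        rw [hrec2 n])
      (by simp only [Prod.snd_neg]; linarith [hd0.1])
      (by simp only [Prod.fst_neg]; linarith)
      (by
        simp only [Prod.fst_neg, Prod.snd_neg, mul_neg]
        linarith)
    rcases key with hT | ⟨l, hl1, hi, hii, hiii, hiv⟩
    · left
      have := hT.neg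
      simpa using this
    · right
      refine ⟨l, hl1, ?_, ?_, ?_, ?_⟩
      · intro j hj1 hj2
        have := hi j hj1 hj2
        simp only [Prod.fst_neg, Prod.snd_neg, neg_neg] at this
        linarith
      · intro j hj1 hj2
        have := hii j hj1 hj2
        simp only [Prod.fst_neg, Prod.snd_neg, neg_neg] at this
        constructor
        · linarith [this.2]
        · linarith [this.1]
      · intro j hj1 hj2
        have := hiii j hj1 hj2
        simp only [Prod.fst_neg] at this
        linarith
      · have := hiv
        simp only [Prod.fst_neg, Prod.snd_neg, neg_neg] at this
        linarith
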